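/- (Theorem 2, vertical force-consensus subsystem UUB.) Let k₄, k_f > 0, let σ : ℝ → ℝ be differentiable with σ(0) = 0 and 0 < σ̲ ≤ σ'(x) ≤ σ̄ for all x ∈ ℝ for constants σ̲, σ̄ > 0; let τ : [0,∞) → ℝ be continuous with 0 < τ̲ ≤ τ(t) ≤ τ̄ for all t ≥ 0 for constants τ̲, τ̄ > 0; and let w : [0,∞) → ℝ be continuous with |w(t)| ≤ w̄ for all t ≥ 0. Suppose there exist ε₁, γ > 0 such that k₄ > ε₁ + τ̄/(4γ) and k_f < ε₁ σ̲ /(γ σ̄²). Then there exists b > 0 such that every twice-differentiable solution y : [0,∞) → ℝ of y''(t) = -k₄ y'(t) - k_f τ(t) σ(y(t)) + w(t) is uniformly ultimately bounded together with its derivative: there exists T ≥ 0 with |y(t)| + |y'(t)| ≤ b for all t ≥ T. -/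

import Mathlib

lemma young_abs (c d x u : ℝ) (hc : 0 < c) (hu : u ≤ d*|x|) :
    u ≤ (c/2)*x^2 + d^2/(2*c) := by
  have h1 : 0 ≤ (c*|x| - d)^2 := sq_nonneg _
  have h2 : |x|^2 = x^2 := sq_abs x
  have h3 : d*|x| ≤ (c/2)*x^2 + d^2/(2*c) := by
    rw [← h2, ← sub_nonneg]
    have hid : (c/2)*|x|^2 + d^2/(2*c) - d*|x| = (c*|x|-d)^2/(2*c) := by
      field_simp
      ring
    rw [hid]; positivity
  linarith

set_option maxHeartbeats 1600000 in
lemma key_ineq (k₄ kf σlo σhi τlo τhi wbar ε₁ γ : ℝ)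
    (hk₄ : 0 < k₄) (hkf : 0 < kf) (hσlo : 0 < σlo) (hσhi : 0 < σhi)
    (hτlo : 0 < τlo) (hε₁ : 0 < ε₁) (hγ : 0 < γ)
    (hα : 0 < k₄ - ε₁ - τhi/(4*γ))
    (hcoef : 0 < ε₁ - γ*kf*σhi)
    (Y Z S Tt W : ℝ)
    (hS1 : σlo ≤ S) (hS2 : S ≤ σhi) (hT1 : τlo ≤ Tt) (hT2 : Tt ≤ τhi)
    (hW : |W| ≤ wbar) :
    -(k₄-ε₁)*Z^2 - kf*Tt*(ε₁*Y+Z)*(S*Y) + W*(ε₁*Y+Z)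
      + (min (k₄ - ε₁ - τhi/(4*γ)) (kf*τlo*σlo^2*(ε₁ - γ*kf*σhi)/σhi)/(k₄*ε₁+2*ε₁+1))
         *((k₄*ε₁*Y^2+2*ε₁*Y*Z+Z^2)/2)
      ≤ wbar^2*ε₁^2/(2*(kf*τlo*σlo^2*(ε₁ - γ*kf*σhi)/σhi))
        + wbar^2/(2*(k₄ - ε₁ - τhi/(4*γ))) := by
  obtain ⟨α, hαdef⟩ : ∃ α : ℝ, α = k₄ - ε₁ - τhi/(4*γ) := ⟨_, rfl⟩
  obtain ⟨β, hβdef⟩ : ∃ β : ℝ, β = kf*τlo*σlo^2*(ε₁ - γ*kf*σhi)/σhi := ⟨_, rfl⟩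
  rw [← hαdef, ← hβdef]
  rw [← hαdef] at hα
  have hβ : 0 < β := by rw [hβdef]; positivity
  have hS0 : 0 < S := lt_of_lt_of_le hσlo hS1
  have hT0 : 0 < Tt := lt_of_lt_of_le hτlo hT1
  have hwbar : 0 ≤ wbar := le_trans (abs_nonneg W) hW
  -- step 1 : sector lower bound on Y * (S*Y)
  have sect1 : -(kf*Tt*ε₁)*(Y*(S*Y)) ≤ -(kf*Tt*ε₁/σhi)*(S*Y)^2 := by
    have hid : kf*Tt*ε₁*(S*(Y^2*(σhi - S)))/σhi
        = -(kf*Tt*ε₁/σhi)*(S*Y)^2 - (-(kf*Tt*ε₁)*(Y*(S*Y))) := by field_simp; ring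
    have hnn : 0 ≤ kf*Tt*ε₁*(S*(Y^2*(σhi - S)))/σhi := by
      apply div_nonneg _ hσhi.le
      have h1 : 0 ≤ Y^2*(σhi - S) := mul_nonneg (sq_nonneg Y) (by linarith)
      have h2 : 0 ≤ S*(Y^2*(σhi - S)) := mul_nonneg hS0.le h1
      positivity
    rw [hid] at hnn; linarith
  -- step 2 : Young inequality on the cross term
  have young : -(kf*Tt)*(Z*(S*Y)) ≤ γ*kf^2*Tt*(S*Y)^2 + Tt*Z^2/(4*γ) := by
    have hid : Tt*(2*γ*kf*(S*Y)+Z)^2/(4*γ)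
        = γ*kf^2*Tt*(S*Y)^2 + Tt*Z^2/(4*γ) - (-(kf*Tt)*(Z*(S*Y))) := by
      field_simp; ring
    have hnn : 0 ≤ Tt*(2*γ*kf*(S*Y)+Z)^2/(4*γ) := by positivity
    rw [hid] at hnn; linarith
  -- step 3 : quadratic Y term
  have quadY : -(kf*Tt*ε₁/σhi)*(S*Y)^2 + γ*kf^2*Tt*(S*Y)^2 ≤ -β*Y^2 := by
    have hid : kf*((Tt-τlo)*S^2 + τlo*(S-σlo)*(S+σlo))*((ε₁ - γ*kf*σhi)*Y^2)/σhi
        = -((-(kf*Tt*ε₁/σhi)*(S*Y)^2 + γ*kf^2*Tt*(S*Y)^2) + β*Y^2) := by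
      rw [hβdef]; field_simp; ring
    have hnn : 0 ≤ kf*((Tt-τlo)*S^2 + τlo*(S-σlo)*(S+σlo))*((ε₁ - γ*kf*σhi)*Y^2)/σhi := by
      apply div_nonneg _ hσhi.le
      have h1 : 0 ≤ (Tt-τlo)*S^2 := mul_nonneg (by linarith) (sq_nonneg S)
      have h2 : 0 ≤ τlo*(S-σlo)*(S+σlo) :=
        mul_nonneg (mul_nonneg hτlo.le (by linarith)) (by linarith)
      have h3 : 0 ≤ (ε₁ - γ*kf*σhi)*Y^2 := mul_nonneg hcoef.le (sq_nonneg Y)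
      have h4 : 0 ≤ (Tt-τlo)*S^2 + τlo*(S-σlo)*(S+σlo) := by linarith
      exact mul_nonneg (mul_nonneg hkf.le h4) h3
    rw [hid] at hnn; linarith
  -- step 4 : Z² coefficient
  have zz : Tt*Z^2/(4*γ) ≤ τhi*Z^2/(4*γ) := by
    have hid : (τhi - Tt)*Z^2/(4*γ) = τhi*Z^2/(4*γ) - Tt*Z^2/(4*γ) := by ring
    have hnn : 0 ≤ (τhi - Tt)*Z^2/(4*γ) :=
      div_nonneg (mul_nonneg (by linarith) (sq_nonneg Z)) (by linarith)
    rw [hid] at hnn; linarith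
  -- step 5 : disturbance on Y
  have wy : W*(ε₁*Y) ≤ (β/2)*Y^2 + wbar^2*ε₁^2/(2*β) := by
    rw [show wbar^2*ε₁^2 = (wbar*ε₁)^2 by ring]
    apply young_abs β (wbar*ε₁) Y _ hβ
    have h1 : W*Y ≤ |W| * |Y| := (le_abs_self (W*Y)).trans_eq (abs_mul W Y)
    have h2 : |W| * |Y| ≤ wbar * |Y| := mul_le_mul_of_nonneg_right hW (abs_nonneg Y)
    have h3 : ε₁*(W*Y) ≤ ε₁*(wbar*|Y|) := mul_le_mul_of_nonneg_left (h1.trans h2) hε₁.le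
    calc W*(ε₁*Y) = ε₁*(W*Y) := by ring
      _ ≤ ε₁*(wbar*|Y|) := h3
      _ = (wbar*ε₁)*|Y| := by ring
  -- step 6 : disturbance on Z
  have wz : W*Z ≤ (α/2)*Z^2 + wbar^2/(2*α) := by
    apply young_abs α wbar Z _ hα
    have h1 : W*Z ≤ |W| * |Z| := (le_abs_self (W*Z)).trans_eq (abs_mul W Z)
    have h2 : |W| * |Z| ≤ wbar * |Z| := mul_le_mul_of_nonneg_right hW (abs_nonneg Z)
    linarith
  -- step 7 : Lyapunov comparison term
  have lamV : (min α β/(k₄*ε₁+2*ε₁+1))*((k₄*ε₁*Y^2+2*ε₁*Y*Z+Z^2)/2)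
      ≤ (β/2)*Y^2 + (α/2)*Z^2 := by
    have hden : 0 < k₄*ε₁+2*ε₁+1 := by positivity
    have hm : 0 < min α β := lt_min hα hβ
    have hV1 : (k₄*ε₁*Y^2+2*ε₁*Y*Z+Z^2)/2 ≤ ((k₄*ε₁+2*ε₁+1)/2)*(Y^2+Z^2) := by
      nlinarith [mul_nonneg hε₁.le (sq_nonneg (Y-Z)), sq_nonneg Y, sq_nonneg Z,
        mul_nonneg (mul_nonneg hk₄.le hε₁.le) (sq_nonneg Z)]
    have h2 : (min α β/(k₄*ε₁+2*ε₁+1))*((k₄*ε₁*Y^2+2*ε₁*Y*Z+Z^2)/2)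
        ≤ (min α β/(k₄*ε₁+2*ε₁+1))*(((k₄*ε₁+2*ε₁+1)/2)*(Y^2+Z^2)) :=
      mul_le_mul_of_nonneg_left hV1 (by positivity)
    have h3 : (min α β/(k₄*ε₁+2*ε₁+1))*(((k₄*ε₁+2*ε₁+1)/2)*(Y^2+Z^2))
        = (min α β/2)*(Y^2+Z^2) := by
      field_simp
    have h4 : (min α β/2)*(Y^2+Z^2) ≤ (β/2)*Y^2 + (α/2)*Z^2 := by
      have l1 : min α β ≤ β := min_le_right _ _
      have l2 : min α β ≤ α := min_le_left _ _
      nlinarith [mul_nonneg (sub_nonneg.mpr l1) (sq_nonneg Y),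
        mul_nonneg (sub_nonneg.mpr l2) (sq_nonneg Z)]
    rw [h3] at h2
    linarith
  -- assemble
  have expand : -(k₄-ε₁)*Z^2 - kf*Tt*(ε₁*Y+Z)*(S*Y) + W*(ε₁*Y+Z)
      = -(k₄-ε₁)*Z^2 + (-(kf*Tt*ε₁)*(Y*(S*Y))) + (-(kf*Tt)*(Z*(S*Y)))
        + W*(ε₁*Y) + W*Z := by ring
  rw [expand]
  have final : -(k₄-ε₁)*Z^2 + τhi*Z^2/(4*γ) = -α*Z^2 := by rw [hαdef]; ring
  linarith [sect1, young, quadY, zz, wy, wz, lamV, final]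

set_option maxHeartbeats 1600000

/-- **Theorem 2.** Uniform ultimate boundedness of the vertical
force-consensus subsystem `y'' = -k₄ y' - k_f τ(t) σ(y) + w(t)`, where `σ` is
sector-bounded (`0 < σ̲ ≤ σ' ≤ σ̄`, `σ(0) = 0`), `0 < τ̲ ≤ τ(t) ≤ τ̄`,
`|w(t)| ≤ w̄`, and the gains satisfy `k₄ > ε₁ + τ̄/(4γ)` and
`k_f < ε₁ σ̲/(γ σ̄²)`. -/
theorem stmt_17 (k₄ kf σlo σhi τlo τhi wbar ε₁ γ : ℝ)
    (hk₄ : 0 < k₄) (hkf : 0 < kf)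
    (hσlo : 0 < σlo) (hσhi : 0 < σhi)
    (hτlo : 0 < τlo) (hτhi : 0 < τhi)
    (hε₁ : 0 < ε₁) (hγ : 0 < γ)
    (σ : ℝ → ℝ) (hσdiff : Differentiable ℝ σ) (hσ0 : σ 0 = 0)
    (hσ' : ∀ x : ℝ, σlo ≤ deriv σ x ∧ deriv σ x ≤ σhi)
    (τ w : ℝ → ℝ)
    (hτcont : ContinuousOn τ (Set.Ici 0))
    (hτbnd : ∀ t : ℝ, 0 ≤ t → τlo ≤ τ t ∧ τ t ≤ τhi)
    (hwcont : ContinuousOn w (Set.Ici 0))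
    (hwbnd : ∀ t : ℝ, 0 ≤ t → |w t| ≤ wbar)
    (hgain1 : ε₁ + τhi / (4 * γ) < k₄)
    (hgain2 : kf < ε₁ * σlo / (γ * σhi^2)) :
    ∃ b > 0, ∀ y : ℝ → ℝ,
      (∀ t : ℝ, 0 ≤ t → DifferentiableAt ℝ y t) →
      (∀ t : ℝ, 0 ≤ t → HasDerivAt (deriv y)
        (-k₄ * deriv y t - kf * τ t * σ (y t) + w t) t) →
      ∃ T : ℝ, 0 ≤ T ∧ ∀ t : ℝ, T ≤ t → |y t| + |deriv y t| ≤ b := by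
  -- basic constants
  have hwbar : 0 ≤ wbar := (abs_nonneg (w 0)).trans (hwbnd 0 le_rfl)
  have hσhilo : σlo ≤ σhi := (hσ' 0).1.trans (hσ' 0).2
  have hα : 0 < k₄ - ε₁ - τhi/(4*γ) := by
    have h1 : 0 < τhi/(4*γ) := by positivity
    linarith
  have hk₄ε₁ : ε₁ < k₄ := by
    have h1 : 0 < τhi/(4*γ) := by positivity
    linarith
  have hcoef : 0 < ε₁ - γ*kf*σhi := by
    have h1 : kf*(γ*σhi^2) < ε₁*σlo := (lt_div_iff₀ (by positivity)).mp hgain2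
    have h2 : ε₁*σlo ≤ ε₁*σhi := mul_le_mul_of_nonneg_left hσhilo hε₁.le
    have h3 : (γ*kf*σhi)*σhi < ε₁*σhi := by nlinarith
    have h4 : γ*kf*σhi < ε₁ := lt_of_mul_lt_mul_right h3 hσhi.le
    linarith
  obtain ⟨lam, hlamdef⟩ : ∃ l : ℝ,
      l = min (k₄ - ε₁ - τhi/(4*γ)) (kf*τlo*σlo^2*(ε₁ - γ*kf*σhi)/σhi)/(k₄*ε₁+2*ε₁+1) :=
    ⟨_, rfl⟩
  have hlam : 0 < lam := by
    rw [hlamdef]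
    have hβ : 0 < kf*τlo*σlo^2*(ε₁-γ*kf*σhi)/σhi := by positivity
    exact div_pos (lt_min hα hβ) (by positivity)
  obtain ⟨K0, hK0def⟩ : ∃ K : ℝ,
      K = wbar^2*ε₁^2/(2*(kf*τlo*σlo^2*(ε₁ - γ*kf*σhi)/σhi))
          + wbar^2/(2*(k₄ - ε₁ - τhi/(4*γ))) := ⟨_, rfl⟩
  have hK0 : 0 ≤ K0 := by
    rw [hK0def]
    have hβ : 0 < kf*τlo*σlo^2*(ε₁-γ*kf*σhi)/σhi := by positivity
    positivity
  obtain ⟨Vmax, hVmaxdef⟩ : ∃ v : ℝ, v = K0/lam + 1 := ⟨_, rfl⟩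
  have hVmax : 0 < Vmax := by rw [hVmaxdef]; positivity
  have hdpos : 0 < ε₁*(k₄-ε₁) := mul_pos hε₁ (by linarith)
  refine ⟨Real.sqrt (2*Vmax/(ε₁*(k₄-ε₁))) + Real.sqrt (2*Vmax)
      + ε₁*Real.sqrt (2*Vmax/(ε₁*(k₄-ε₁))) + 1, by positivity, ?_⟩
  intro y hy1 hy2
  -- sector property of σ
  have sector : ∀ u : ℝ, ∃ s : ℝ, σlo ≤ s ∧ s ≤ σhi ∧ σ u = s * u := by
    intro u
    rcases lt_trichotomy u 0 with hu | hu | hu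
    · obtain ⟨c, _, hc⟩ := exists_hasDerivAt_eq_slope σ (deriv σ) hu
        (hσdiff.continuous.continuousOn) (fun x _ => (hσdiff x).hasDerivAt)
      refine ⟨deriv σ c, (hσ' c).1, (hσ' c).2, ?_⟩
      rw [hc, hσ0]
      field_simp [hu.ne]
      ring
    · exact ⟨σlo, le_rfl, hσhilo, by rw [hu, hσ0, mul_zero]⟩
    · obtain ⟨c, _, hc⟩ := exists_hasDerivAt_eq_slope σ (deriv σ) hu
        (hσdiff.continuous.continuousOn) (fun x _ => (hσdiff x).hasDerivAt)
      refine ⟨deriv σ c, (hσ' c).1, (hσ' c).2, ?_⟩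
      rw [hc, hσ0]
      field_simp [hu.ne']
      ring
  -- derivative of the Lyapunov function
  have hVd : ∀ t : ℝ, 0 ≤ t → HasDerivAt
      (fun s => ((k₄*ε₁) * y s ^ 2 + (2*ε₁) * (y s * deriv y s) + deriv y s ^ 2) / 2)
      (-(k₄-ε₁)*(deriv y t)^2
        - kf*(τ t)*(ε₁*(y t)+deriv y t)*(σ (y t))
        + (w t)*(ε₁*(y t)+deriv y t)) t := by
    intro t ht
    have hyt : HasDerivAt y (deriv y t) t := (hy1 t ht).hasDerivAt
    have hzt := hy2 t ht
    have h := ((((hyt.pow 2).const_mul (k₄*ε₁)).add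
      ((hyt.mul hzt).const_mul (2*ε₁))).add (hzt.pow 2)).div_const 2
    refine h.congr_deriv ?_
    push_cast
    ring
  -- derivative of g = (V - K0/lam) * exp(lam t)
  have hgd : ∀ t : ℝ, 0 ≤ t → HasDerivAt
      (fun s => (((k₄*ε₁) * y s ^ 2 + (2*ε₁) * (y s * deriv y s) + deriv y s ^ 2) / 2
          - K0/lam) * Real.exp (lam*s))
      ((( -(k₄-ε₁)*(deriv y t)^2
          - kf*(τ t)*(ε₁*(y t)+deriv y t)*(σ (y t))
          + (w t)*(ε₁*(y t)+deriv y t))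
        + lam*(((k₄*ε₁) * y t ^ 2 + (2*ε₁) * (y t * deriv y t) + deriv y t ^ 2) / 2)
        - K0) * Real.exp (lam*t)) t := by
    intro t ht
    have hlin : HasDerivAt (fun s : ℝ => lam*s) lam t := by
      simpa using (hasDerivAt_id t).const_mul lam
    have hexpd := hlin.exp
    have h := ((hVd t ht).sub_const (K0/lam)).mul hexpd
    refine h.congr_deriv ?_
    field_simp
    ring
  -- the derivative of g is nonpositive
  have hE : ∀ t : ℝ, 0 ≤ t →
      (( -(k₄-ε₁)*(deriv y t)^2
          - kf*(τ t)*(ε₁*(y t)+deriv y t)*(σ (y t))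
          + (w t)*(ε₁*(y t)+deriv y t))
        + lam*(((k₄*ε₁) * y t ^ 2 + (2*ε₁) * (y t * deriv y t) + deriv y t ^ 2) / 2)
        - K0) ≤ 0 := by
    intro t ht
    obtain ⟨s, hs1, hs2, hs3⟩ := sector (y t)
    have hk := key_ineq k₄ kf σlo σhi τlo τhi wbar ε₁ γ hk₄ hkf hσlo hσhi hτlo hε₁ hγ
      hα hcoef (y t) (deriv y t) s (τ t) (w t) hs1 hs2 (hτbnd t ht).1 (hτbnd t ht).2
      (hwbnd t ht)
    rw [← hs3, ← hlamdef, ← hK0def] at hk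
    linarith [hk]
  -- g is antitone on [0,∞)
  have hmono : AntitoneOn
      (fun s => (((k₄*ε₁) * y s ^ 2 + (2*ε₁) * (y s * deriv y s) + deriv y s ^ 2) / 2
          - K0/lam) * Real.exp (lam*s)) (Set.Ici 0) := by
    apply antitoneOn_of_deriv_nonpos (convex_Ici 0)
    · intro x hx
      exact (hgd x hx).continuousAt.continuousWithinAt
    · rw [interior_Ici]
      intro x hx
      exact (hgd x hx.le).differentiableAt.differentiableWithinAt
    · rw [interior_Ici]
      intro x hx
      rw [(hgd x hx.le).deriv]
      exact mul_nonpos_of_nonpos_of_nonneg (hE x hx.le) (Real.exp_nonneg _)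
  have hbound : ∀ t : ℝ, 0 ≤ t →
      (((k₄*ε₁) * y t ^ 2 + (2*ε₁) * (y t * deriv y t) + deriv y t ^ 2) / 2 - K0/lam)
        * Real.exp (lam*t)
      ≤ ((k₄*ε₁) * y 0 ^ 2 + (2*ε₁) * (y 0 * deriv y 0) + deriv y 0 ^ 2) / 2 - K0/lam := by
    intro t ht
    have h := hmono (Set.self_mem_Ici) ht ht
    simpa using h
  -- choose T
  obtain ⟨C, hCdef⟩ : ∃ c : ℝ, c = max (((k₄*ε₁) * y 0 ^ 2 + (2*ε₁) * (y 0 * deriv y 0)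
      + deriv y 0 ^ 2) / 2 - K0/lam) 0 := ⟨_, rfl⟩
  have hC0 : 0 ≤ C := hCdef ▸ le_max_right _ _
  refine ⟨max 0 (Real.log (C+1)/lam), le_max_left _ _, ?_⟩
  intro t htT
  have ht0 : 0 ≤ t := le_trans (le_max_left _ _) htT
  -- V t ≤ Vmax
  have hVt : ((k₄*ε₁) * y t ^ 2 + (2*ε₁) * (y t * deriv y t) + deriv y t ^ 2) / 2
      ≤ Vmax := by
    have h1 := hbound t ht0
    have h1' : (((k₄*ε₁) * y t ^ 2 + (2*ε₁) * (y t * deriv y t) + deriv y t ^ 2) / 2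
        - K0/lam) * Real.exp (lam*t) ≤ C := by
      rw [hCdef]; exact h1.trans (le_max_left _ _)
    have hexp : C+1 ≤ Real.exp (lam*t) := by
      have h2 : Real.log (C+1)/lam ≤ t := le_trans (le_max_right _ _) htT
      have h3 : Real.log (C+1) ≤ lam*t := by
        have h4 : lam*(Real.log (C+1)/lam) ≤ lam*t := mul_le_mul_of_nonneg_left h2 hlam.le
        rw [mul_div_cancel₀ _ hlam.ne'] at h4
        exact h4
      calc C+1 = Real.exp (Real.log (C+1)) := (Real.exp_log (by linarith)).symm
        _ ≤ Real.exp (lam*t) := Real.exp_le_exp.mpr h3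
    rw [hVmaxdef]
    by_cases hcase : ((k₄*ε₁) * y t ^ 2 + (2*ε₁) * (y t * deriv y t) + deriv y t ^ 2) / 2
        - K0/lam ≤ 0
    · linarith
    · push_neg at hcase
      by_contra hcon
      push_neg at hcon
      have h5 : (1:ℝ) < ((k₄*ε₁) * y t ^ 2 + (2*ε₁) * (y t * deriv y t)
          + deriv y t ^ 2) / 2 - K0/lam := by linarith
      have h6 : 0 < C + 1 := by linarith
      nlinarith [mul_le_mul_of_nonneg_left hexp (le_of_lt (lt_trans zero_lt_one h5)), h1']
  -- extract the bound
  have hq1 : ε₁*(k₄-ε₁)*(y t)^2 + (ε₁*(y t)+deriv y t)^2 ≤ 2*Vmax := by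
    have hexp2 : ε₁*(k₄-ε₁)*(y t)^2 + (ε₁*(y t)+deriv y t)^2
        = 2*(((k₄*ε₁) * y t ^ 2 + (2*ε₁) * (y t * deriv y t) + deriv y t ^ 2) / 2) := by
      ring
    linarith [hexp2 ▸ (by linarith [hVt] :
      2*(((k₄*ε₁) * y t ^ 2 + (2*ε₁) * (y t * deriv y t) + deriv y t ^ 2) / 2) ≤ 2*Vmax)]
  have hy2b : (y t)^2 ≤ 2*Vmax/(ε₁*(k₄-ε₁)) := by
    rw [le_div_iff₀ hdpos]
    nlinarith [hq1, sq_nonneg (ε₁*(y t)+deriv y t)]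
  have hyabs : |y t| ≤ Real.sqrt (2*Vmax/(ε₁*(k₄-ε₁))) := by
    rw [← Real.sqrt_sq_eq_abs]
    exact Real.sqrt_le_sqrt hy2b
  have hzq : (ε₁*(y t)+deriv y t)^2 ≤ 2*Vmax := by
    nlinarith [hq1, mul_nonneg hdpos.le (sq_nonneg (y t))]
  have hzabs : |ε₁*(y t)+deriv y t| ≤ Real.sqrt (2*Vmax) := by
    rw [← Real.sqrt_sq_eq_abs]
    exact Real.sqrt_le_sqrt hzq
  have hz : |deriv y t| ≤ Real.sqrt (2*Vmax) + ε₁*|y t| := by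
    have hid : deriv y t = (ε₁*(y t)+deriv y t) + -(ε₁*(y t)) := by ring
    calc |deriv y t| = |(ε₁*(y t)+deriv y t) + -(ε₁*(y t))| := by rw [← hid]
      _ ≤ |ε₁*(y t)+deriv y t| + |-(ε₁*(y t))| := abs_add_le _ _
      _ = |ε₁*(y t)+deriv y t| + ε₁*|y t| := by
          rw [abs_neg, abs_mul, abs_of_pos hε₁]
      _ ≤ Real.sqrt (2*Vmax) + ε₁*|y t| := by linarith [hzabs]
  have hεy : ε₁*|y t| ≤ ε₁*Real.sqrt (2*Vmax/(ε₁*(k₄-ε₁))) :=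
    mul_le_mul_of_nonneg_left hyabs hε₁.le
  linarith [hyabs, hz, hεy]
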